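/- Let q be a prime power and F a (q+1)-graph with a single edge e. Define the q-augmentation e^{+q} as the (q+1)-graph obtained from the q-blowup e(q) of e (each vertex x replaced by q copies x₁,…,x_q, each edge by all q^{q+1} transversal edges) by adding one new vertex v and all edges {v} ∪ {x₁,…,x_q} for x ∈ e. Then PG₂(q) is a subhypergraph of e^{+q}: there is an injective map from the points of PG₂(q) into the vertices of e^{+q} carrying each line of PG₂(q) to an edge of e^{+q}. -/

import Mathlib

open scoped LinearAlgebra.Projectivization

/-- The set of points on the line through two points. -/
def lineThrough {K V : Type*} [DivisionRing K] [AddCommGroup V] [Module K V]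
    (a b : ℙ K V) : Set (ℙ K V) :=
  {c | c.submodule ≤ a.submodule ⊔ b.submodule}

/-- `L` is a line of the projective plane `ℙ K V`. -/
def IsLine {K V : Type*} [DivisionRing K] [AddCommGroup V] [Module K V]
    (L : Set (ℙ K V)) : Prop :=
  ∃ a b : ℙ K V, a ≠ b ∧ L = lineThrough a b

namespace PG2Aux

open Projectivization Submodule Module

variable {K : Type*} [Field K]

/-- The third standard basis vector, serving as the special point. -/
def e2 : Fin 3 → K := ![0, 0, 1]

lemma e2_ne_zero : (e2 : Fin 3 → K) ≠ 0 := by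
  intro h; have := congrFun h 2; simp [e2] at this

lemma e2_zero : (e2 : Fin 3 → K) 0 = 0 := rfl
lemma e2_one : (e2 : Fin 3 → K) 1 = 0 := rfl
lemma e2_two : (e2 : Fin 3 → K) 2 = 1 := rfl

/-- The special point `[0:0:1]`. -/
noncomputable def pt (K : Type*) [Field K] : ℙ K (Fin 3 → K) :=
  Projectivization.mk K e2 e2_ne_zero

open Classical in
/-- The direction (line through `pt`) of a vector. -/
noncomputable def dirv (v : Fin 3 → K) : Option K :=
  if v 0 = 0 then none else some ((v 0)⁻¹ * v 1)

open Classical in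
/-- The normalized last coordinate of a vector. -/
noncomputable def iv (v : Fin 3 → K) : K := (if v 0 = 0 then (v 1)⁻¹ else (v 0)⁻¹) * v 2

lemma dirv_smul {c : K} (hc : c ≠ 0) (v : Fin 3 → K) : dirv (c • v) = dirv v := by
  unfold dirv
  simp only [Pi.smul_apply, smul_eq_mul]
  by_cases h : v 0 = 0
  · simp [h]
  · have h' : c * v 0 ≠ 0 := mul_ne_zero hc h
    rw [if_neg h, if_neg h']
    congr 1
    field_simp

lemma iv_smul {c : K} (hc : c ≠ 0) (v : Fin 3 → K) : iv (c • v) = iv v := by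
  unfold iv
  simp only [Pi.smul_apply, smul_eq_mul]
  by_cases h : v 0 = 0
  · rw [if_pos h, if_pos (by simp [h])]
    by_cases h1 : v 1 = 0
    · simp [h1]
    · field_simp
  · have h' : c * v 0 ≠ 0 := mul_ne_zero hc h
    rw [if_neg h, if_neg h']
    field_simp

noncomputable def dirP (P : ℙ K (Fin 3 → K)) : Option K := dirv P.rep

noncomputable def iP (P : ℙ K (Fin 3 → K)) : K := iv P.rep

lemma dirP_mk (v : Fin 3 → K) (hv : v ≠ 0) :
    dirP (Projectivization.mk K v hv) = dirv v := by
  obtain ⟨a, ha⟩ := exists_smul_eq_mk_rep K v hv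
  rw [dirP, ← ha, Units.smul_def, dirv_smul a.ne_zero]

lemma iP_mk (v : Fin 3 → K) (hv : v ≠ 0) :
    iP (Projectivization.mk K v hv) = iv v := by
  obtain ⟨a, ha⟩ := exists_smul_eq_mk_rep K v hv
  rw [iP, ← ha, Units.smul_def, iv_smul a.ne_zero]

lemma mk_eq_pt_iff (v : Fin 3 → K) (hv : v ≠ 0) :
    Projectivization.mk K v hv = pt K ↔ v 0 = 0 ∧ v 1 = 0 := by
  rw [pt, Projectivization.mk_eq_mk_iff']
  constructor
  · rintro ⟨a, rfl⟩
    constructor <;> simp [e2]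
  · rintro ⟨h0, h1⟩
    refine ⟨v 2, funext fun i => ?_⟩
    fin_cases i <;> simp [e2, h0, h1]

lemma eq_pt_iff (P : ℙ K (Fin 3 → K)) :
    P = pt K ↔ P.rep 0 = 0 ∧ P.rep 1 = 0 := by
  conv_lhs => rw [← P.mk_rep]
  exact mk_eq_pt_iff _ _

lemma ne_pt_iff (P : ℙ K (Fin 3 → K)) :
    P ≠ pt K ↔ ¬(P.rep 0 = 0 ∧ P.rep 1 = 0) :=
  not_congr (eq_pt_iff P)

lemma rep_mem_iff (v : Fin 3 → K) (hv : v ≠ 0) (W : Submodule K (Fin 3 → K)) :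
    (Projectivization.mk K v hv).rep ∈ W ↔ v ∈ W := by
  obtain ⟨a, ha⟩ := exists_smul_eq_mk_rep K v hv
  rw [← ha, Units.smul_def]
  exact Submodule.smul_mem_iff W a.ne_zero

lemma mem_lineThrough_iff (a b P : ℙ K (Fin 3 → K)) :
    P ∈ lineThrough a b ↔ P.rep ∈ Submodule.span K {a.rep, b.rep} := by
  show P.submodule ≤ a.submodule ⊔ b.submodule ↔ _
  rw [P.submodule_eq, a.submodule_eq, b.submodule_eq,
    Submodule.span_singleton_le_iff_mem]
  congr! 1
  rw [show ({a.rep, b.rep} : Set (Fin 3 → K)) = {a.rep} ∪ {b.rep} by rfl,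
    Submodule.span_union]

lemma indep_of_ne {u w : Fin 3 → K} (hu : u ≠ 0) (hw : w ≠ 0)
    (h : Projectivization.mk K u hu ≠ Projectivization.mk K w hw) :
    LinearIndependent K ![u, w] := by
  rw [LinearIndependent.pair_iff' hu]
  intro a ha
  have ha0 : a ≠ 0 := by
    rintro rfl; rw [zero_smul] at ha; exact hw ha.symm
  exact h ((Projectivization.mk_eq_mk_iff' K u w hu hw).2 ⟨a⁻¹, by
    rw [← ha, smul_smul, inv_mul_cancel₀ ha0, one_smul]⟩)

lemma finrank_span_pair {u w : Fin 3 → K} (h : LinearIndependent K ![u, w]) :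
    finrank K (Submodule.span K ({u, w} : Set (Fin 3 → K))) = 2 := by
  have := finrank_span_eq_card h
  rw [show Set.range ![u, w] = {u, w} by
    ext x
    simp only [Matrix.range_cons, Matrix.range_empty, Set.union_empty,
      Set.union_singleton, Set.mem_insert_iff, Set.mem_singleton_iff]
    tauto] at this
  simpa using this

lemma span_pair_eq (W : Submodule K (Fin 3 → K)) (hW : finrank K W = 2)
    {u w : Fin 3 → K} (hu : u ∈ W) (hw : w ∈ W)
    (hind : LinearIndependent K ![u, w]) :
    Submodule.span K ({u, w} : Set (Fin 3 → K)) = W := by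
  refine Submodule.eq_of_le_of_finrank_eq ?_ (by rw [finrank_span_pair hind, hW])
  rw [Submodule.span_le, Set.insert_subset_iff, Set.singleton_subset_iff]
  exact ⟨hu, hw⟩


lemma prop_of_dirv_eq {u w : Fin 3 → K} (hu : ¬(u 0 = 0 ∧ u 1 = 0))
    (hw : ¬(w 0 = 0 ∧ w 1 = 0)) (h : dirv u = dirv w) :
    ∃ c : K, c ≠ 0 ∧ w 0 = c * u 0 ∧ w 1 = c * u 1 := by
  unfold dirv at h
  by_cases h0 : u 0 = 0
  · rw [if_pos h0] at h
    have hw0 : w 0 = 0 := by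
      by_contra hw0
      rw [if_neg hw0] at h
      cases h
    have hu1 : u 1 ≠ 0 := fun h1 => hu ⟨h0, h1⟩
    have hw1 : w 1 ≠ 0 := fun h1 => hw ⟨hw0, h1⟩
    exact ⟨w 1 * (u 1)⁻¹, mul_ne_zero hw1 (inv_ne_zero hu1),
      by rw [h0, hw0]; ring, by field_simp⟩
  · rw [if_neg h0] at h
    have hw0 : w 0 ≠ 0 := by
      intro hw0
      rw [if_pos hw0] at h
      cases h
    rw [if_neg hw0, Option.some.injEq] at h
    refine ⟨w 0 * (u 0)⁻¹, mul_ne_zero hw0 (inv_ne_zero h0), by field_simp, ?_⟩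
    have hw1 : w 1 = w 0 * ((w 0)⁻¹ * w 1) := by field_simp
    rw [hw1, ← h]
    ring

lemma dirv_eq_of_prop {u w : Fin 3 → K} {c : K} (hc : c ≠ 0)
    (h0 : w 0 = c * u 0) (h1 : w 1 = c * u 1) : dirv w = dirv u := by
  unfold dirv
  by_cases h : u 0 = 0
  · rw [if_pos h, if_pos (by rw [h0, h, mul_zero])]
  · have hw0 : w 0 ≠ 0 := by
      rw [h0]; exact mul_ne_zero hc h
    rw [if_neg h, if_neg hw0, Option.some.injEq, h0, h1]
    field_simp

lemma e2_mem_span_of_dirv_eq {u w : Fin 3 → K} (hu0 : u ≠ 0) (hw0 : w ≠ 0)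
    (hu : ¬(u 0 = 0 ∧ u 1 = 0)) (hw : ¬(w 0 = 0 ∧ w 1 = 0))
    (hne : Projectivization.mk K u hu0 ≠ Projectivization.mk K w hw0)
    (h : dirv u = dirv w) :
    (e2 : Fin 3 → K) ∈ Submodule.span K ({u, w} : Set (Fin 3 → K)) := by
  obtain ⟨c, hc, h0, h1⟩ := prop_of_dirv_eq hu hw h
  set t := w 2 - c * u 2 with ht
  have hwc : w - c • u = t • e2 := by
    funext i
    fin_cases i <;> simp [e2, h0, h1, ht] <;> ring
  have htne : t ≠ 0 := by
    intro h'
    rw [h', zero_smul, sub_eq_zero] at hwc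
    exact hne ((Projectivization.mk_eq_mk_iff' K u w hu0 hw0).2
      ⟨c⁻¹, by rw [hwc, smul_smul, inv_mul_cancel₀ hc, one_smul]⟩)
  have he : (e2 : Fin 3 → K) = t⁻¹ • (w - c • u) := by
    rw [hwc, smul_smul, inv_mul_cancel₀ htne, one_smul]
  rw [he]
  exact Submodule.smul_mem _ _ (Submodule.sub_mem _
    (Submodule.subset_span (by simp))
    (Submodule.smul_mem _ _ (Submodule.subset_span (by simp))))

lemma dirv_eq_of_e2_mem {u w : Fin 3 → K}
    (hu : ¬(u 0 = 0 ∧ u 1 = 0)) (hw : ¬(w 0 = 0 ∧ w 1 = 0))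
    (h : (e2 : Fin 3 → K) ∈ Submodule.span K ({u, w} : Set (Fin 3 → K))) :
    dirv u = dirv w := by
  obtain ⟨α, β, hαβ⟩ := Submodule.mem_span_pair.1 h
  have e0 : α * u 0 + β * w 0 = 0 := by
    have := congrFun hαβ 0; simpa [e2] using this
  have e1 : α * u 1 + β * w 1 = 0 := by
    have := congrFun hαβ 1; simpa [e2] using this
  have e2' : α * u 2 + β * w 2 = 1 := by
    have := congrFun hαβ 2; simpa [e2] using this
  have hα : α ≠ 0 := by
    rintro rfl
    simp only [zero_mul, zero_add] at e0 e1 e2'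
    have hβ : β ≠ 0 := by
      intro hb; rw [hb, zero_mul] at e2'; exact zero_ne_one e2'
    exact hw ⟨by rcases mul_eq_zero.1 e0 with h' | h'; exact absurd h' hβ; exact h',
      by rcases mul_eq_zero.1 e1 with h' | h'; exact absurd h' hβ; exact h'⟩
  have hβ : β ≠ 0 := by
    rintro rfl
    simp only [zero_mul, add_zero] at e0 e1 e2'
    have : α ≠ 0 := hα
    exact hu ⟨by rcases mul_eq_zero.1 e0 with h' | h'; exact absurd h' this; exact h',
      by rcases mul_eq_zero.1 e1 with h' | h'; exact absurd h' this; exact h'⟩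
  have hc : -(β * α⁻¹) ≠ 0 := by
    simp [hα, hβ]
  refine dirv_eq_of_prop hc ?_ ?_
  · rw [neg_mul, mul_comm β α⁻¹, mul_assoc]
    have hb : β * w 0 = -(α * u 0) := by linear_combination e0
    rw [hb, mul_neg, neg_neg, ← mul_assoc, inv_mul_cancel₀ hα, one_mul]
  · rw [neg_mul, mul_comm β α⁻¹, mul_assoc]
    have hb : β * w 1 = -(α * u 1) := by linear_combination e1
    rw [hb, mul_neg, neg_neg, ← mul_assoc, inv_mul_cancel₀ hα, one_mul]

lemma exists_prop_delta (W : Submodule K (Fin 3 → K)) (hW : finrank K W = 2)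
    (he : (e2 : Fin 3 → K) ∉ W) (δ : Fin 3 → K) (hδ2 : δ 2 = 0)
    (hδ : ¬(δ 0 = 0 ∧ δ 1 = 0)) :
    ∃ u β : _, u ∈ W ∧ u ≠ 0 ∧ (β : K) ≠ 0 ∧ u 0 = β * δ 0 ∧ u 1 = β * δ 1 := by
  have hδ0 : (δ : Fin 3 → K) ≠ 0 := by
    intro h'
    exact hδ ⟨by rw [h']; rfl, by rw [h']; rfl⟩
  have hind : LinearIndependent K ![(e2 : Fin 3 → K), δ] := by
    rw [LinearIndependent.pair_iff' e2_ne_zero]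
    intro a ha
    apply hδ
    constructor
    · have := congrFun ha 0; simpa [e2] using this.symm
    · have := congrFun ha 1; simpa [e2] using this.symm
  have hW' : finrank K (Submodule.span K ({(e2 : Fin 3 → K), δ} : Set (Fin 3 → K))) = 2 :=
    finrank_span_pair hind
  set W' := Submodule.span K ({(e2 : Fin 3 → K), δ} : Set (Fin 3 → K)) with hW'def
  have hbot : W ⊓ W' ≠ ⊥ := by
    intro hb
    have hsum := Submodule.finrank_sup_add_finrank_inf_eq W W'
    rw [hb, finrank_bot, add_zero, hW, hW'] at hsum
    have hle : finrank K ↑(W ⊔ W') ≤ finrank K (Fin 3 → K) := Submodule.finrank_le _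
    rw [hsum] at hle
    simp [Module.finrank_pi] at hle
  obtain ⟨u, huW, hu0⟩ := Submodule.exists_mem_ne_zero_of_ne_bot hbot
  obtain ⟨α, β, hαβ⟩ := Submodule.mem_span_pair.1 (huW.2 : u ∈ W')
  have hu0' : u 0 = β * δ 0 := by
    have := congrFun hαβ 0; simpa [e2] using this.symm
  have hu1' : u 1 = β * δ 1 := by
    have := congrFun hαβ 1; simpa [e2] using this.symm
  have hβ : β ≠ 0 := by
    rintro rfl
    apply he
    have huα : u = α • e2 := by
      funext i
      have := congrFun hαβ i
      rw [zero_smul, add_zero] at this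
      rw [← this]
    have hα : α ≠ 0 := by
      rintro rfl; rw [zero_smul] at huα; exact hu0 huα
    have : (e2 : Fin 3 → K) = α⁻¹ • u := by
      rw [huα, smul_smul, inv_mul_cancel₀ hα, one_smul]
    rw [this]
    exact Submodule.smul_mem _ _ huW.1
  exact ⟨u, β, huW.1, hu0, hβ, hu0', hu1'⟩

lemma exists_dirv (W : Submodule K (Fin 3 → K)) (hW : finrank K W = 2)
    (he : (e2 : Fin 3 → K) ∉ W) (d : Option K) :
    ∃ v : Fin 3 → K, v ≠ 0 ∧ v ∈ W ∧ ¬(v 0 = 0 ∧ v 1 = 0) ∧ dirv v = d := by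
  cases d with
  | none =>
    obtain ⟨u, β, huW, hu0, hβ, h0, h1⟩ :=
      exists_prop_delta W hW he ![0, 1, 0] (by simp) (by simp)
    refine ⟨u, hu0, huW, ?_, ?_⟩
    · simp only [Matrix.cons_val_zero, Matrix.cons_val_one, Matrix.head_cons] at h0 h1
      intro ⟨_, hc1⟩
      rw [h1, mul_one] at hc1
      exact hβ hc1
    · unfold dirv
      rw [if_pos (by simp only [Matrix.cons_val_zero] at h0; rw [h0, mul_zero])]
  | some y =>
    obtain ⟨u, β, huW, hu0, hβ, h0, h1⟩ :=
      exists_prop_delta W hW he ![1, y, 0] (by simp) (by simp)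
    simp only [Matrix.cons_val_zero, Matrix.cons_val_one, Matrix.head_cons, mul_one] at h0 h1
    refine ⟨u, hu0, huW, fun ⟨hc0, _⟩ => hβ (by rwa [h0] at hc0), ?_⟩
    unfold dirv
    rw [if_neg (by rw [h0]; exact hβ), Option.some.injEq, h0, h1]
    field_simp

lemma exists_iv (W : Submodule K (Fin 3 → K))
    (he : (e2 : Fin 3 → K) ∈ W) {w : Fin 3 → K} (hwW : w ∈ W)
    (hw : ¬(w 0 = 0 ∧ w 1 = 0)) (c : K) :
    ∃ z : Fin 3 → K, z ≠ 0 ∧ z ∈ W ∧ ¬(z 0 = 0 ∧ z 1 = 0) ∧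
      dirv z = dirv w ∧ iv z = c := by
  classical
  set s : K := if w 0 = 0 then (w 1)⁻¹ else (w 0)⁻¹ with hs
  have hsne : s ≠ 0 := by
    rw [hs]
    by_cases h : w 0 = 0
    · rw [if_pos h]
      exact inv_ne_zero fun h1 => hw ⟨h, h1⟩
    · rw [if_neg h]
      exact inv_ne_zero h
  set z : Fin 3 → K := s • w + (c - s * w 2) • e2 with hz
  have hz0 : z 0 = s * w 0 := by
    rw [hz]
    simp only [Pi.add_apply, Pi.smul_apply, smul_eq_mul, e2_zero, mul_zero, add_zero]
  have hz1 : z 1 = s * w 1 := by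
    rw [hz]
    simp only [Pi.add_apply, Pi.smul_apply, smul_eq_mul, e2_one, mul_zero, add_zero]
  have hz2 : z 2 = c := by
    rw [hz]
    simp only [Pi.add_apply, Pi.smul_apply, smul_eq_mul, e2_two, mul_one]
    ring
  have hz01 : ¬(z 0 = 0 ∧ z 1 = 0) := by
    rintro ⟨u0, u1⟩
    rw [hz0] at u0
    rw [hz1] at u1
    exact hw ⟨by rcases mul_eq_zero.1 u0 with h' | h'; exact absurd h' hsne; exact h',
      by rcases mul_eq_zero.1 u1 with h' | h'; exact absurd h' hsne; exact h'⟩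
  refine ⟨z, fun h' => hz01 ⟨by rw [h']; rfl, by rw [h']; rfl⟩,
    Submodule.add_mem _ (Submodule.smul_mem _ _ hwW) (Submodule.smul_mem _ _ he),
    hz01, dirv_eq_of_prop hsne hz0 hz1, ?_⟩
  unfold iv
  by_cases h : w 0 = 0
  · have hzz : z 0 = 0 := by rw [hz0, h, mul_zero]
    rw [if_pos hzz, hz1, hz2, hs, if_pos h]
    have hw1 : w 1 ≠ 0 := fun h1 => hw ⟨h, h1⟩
    rw [inv_mul_cancel₀ hw1]
    simp
  · have hzz : z 0 ≠ 0 := by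
      rw [hz0, hs, if_neg h]
      exact fun h' => h (by
        rcases mul_eq_zero.1 h' with h'' | h''
        · exact absurd h'' (inv_ne_zero h)
        · exact h'')
    rw [if_neg hzz, hz0, hz2, hs, if_neg h, inv_mul_cancel₀ h]
    simp


lemma pt_mem_iff (W : Submodule K (Fin 3 → K)) :
    (pt K).rep ∈ W ↔ (e2 : Fin 3 → K) ∈ W :=
  rep_mem_iff e2 e2_ne_zero W

lemma eq_of_dir_iv {P Q : ℙ K (Fin 3 → K)} (hP : P ≠ pt K) (hQ : Q ≠ pt K)
    (hd : dirP P = dirP Q) (hi : iP P = iP Q) : P = Q := by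
  have hu := (ne_pt_iff P).1 hP
  have hw := (ne_pt_iff Q).1 hQ
  obtain ⟨c, hc, h0, h1⟩ := prop_of_dirv_eq hu hw hd
  have h2 : Q.rep 2 = c * P.rep 2 := by
    unfold iP iv at hi
    by_cases h : P.rep 0 = 0
    · have hq0 : Q.rep 0 = 0 := by rw [h0, h, mul_zero]
      have hu1 : P.rep 1 ≠ 0 := fun h1' => hu ⟨h, h1'⟩
      rw [if_pos h, if_pos hq0, h1] at hi
      have hcu : c * P.rep 1 ≠ 0 := mul_ne_zero hc hu1
      have : Q.rep 2 = (c * P.rep 1) * ((c * P.rep 1)⁻¹ * Q.rep 2) := by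
        field_simp
      rw [this, ← hi]
      field_simp
    · have hq0 : Q.rep 0 ≠ 0 := by rw [h0]; exact mul_ne_zero hc h
      rw [if_neg h, if_neg hq0, h0] at hi
      have hcu : c * P.rep 0 ≠ 0 := mul_ne_zero hc h
      have : Q.rep 2 = (c * P.rep 0) * ((c * P.rep 0)⁻¹ * Q.rep 2) := by
        field_simp
      rw [this, ← hi]
      field_simp
  have hQP : Q.rep = c • P.rep := by
    funext i
    fin_cases i <;> simp only [Pi.smul_apply, smul_eq_mul]
    · exact h0
    · exact h1
    · exact h2
  have : Projectivization.mk K Q.rep Q.rep_nonzero =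
      Projectivization.mk K P.rep P.rep_nonzero :=
    (Projectivization.mk_eq_mk_iff' K _ _ _ _).2 ⟨c, hQP.symm⟩
  rw [P.mk_rep, Q.mk_rep] at this
  exact this.symm

end PG2Aux

/-- `PG₂(q)` is a subhypergraph of the `q`-augmentation `e^{+q}` of a single
`(q+1)`-edge `e`: the vertices of `e^{+q}` are the `q(q+1)` clones
`(j, i) : Fin (q+1) × Fin q` together with one extra vertex, and its edges are
the transversal edges `{(j, f j) : j}` of the blowup together with the star
edges `{v} ∪ {(x, i) : i}`. There is an injection of the points of `PG₂(q)`
(over a finite field `K` with `|K| = q`) into these vertices carrying every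
line of `PG₂(q)` to an edge of `e^{+q}`. -/
theorem pg2_subset_augmented_edge (q : ℕ) (K : Type*) [Field K] [Fintype K]
    (hK : Fintype.card K = q) :
    ∃ φ : ℙ K (Fin 3 → K) → (Fin (q + 1) × Fin q) ⊕ Unit,
      Function.Injective φ ∧
      ∀ L : Finset (ℙ K (Fin 3 → K)), IsLine (↑L : Set (ℙ K (Fin 3 → K))) →
        (∃ f : Fin (q + 1) → Fin q,
          L.image φ = Finset.image
            (fun j => (Sum.inl (j, f j) : (Fin (q + 1) × Fin q) ⊕ Unit))
            Finset.univ) ∨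
        (∃ x : Fin (q + 1),
          L.image φ = insert (Sum.inr () : (Fin (q + 1) × Fin q) ⊕ Unit)
            (Finset.image
              (fun i => (Sum.inl (x, i) : (Fin (q + 1) × Fin q) ⊕ Unit))
              Finset.univ)) := by
  classical
  obtain ⟨eK⟩ : Nonempty (K ≃ Fin q) := ⟨Fintype.equivFinOfCardEq hK⟩
  obtain ⟨eD⟩ : Nonempty (Option K ≃ Fin (q + 1)) :=
    ⟨Fintype.equivFinOfCardEq (by simp [hK])⟩
  set p : ℙ K (Fin 3 → K) := PG2Aux.pt K with hp
  refine ⟨fun P => if P = p then Sum.inr () else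
    Sum.inl (eD (PG2Aux.dirP P), eK (PG2Aux.iP P)), ?_, ?_⟩
  · intro P Q h
    dsimp only at h
    by_cases hP : P = p <;> by_cases hQ : Q = p
    · rw [hP, hQ]
    · rw [if_pos hP, if_neg hQ] at h
      simp at h
    · rw [if_neg hP, if_pos hQ] at h
      simp at h
    · rw [if_neg hP, if_neg hQ, Sum.inl.injEq, Prod.mk.injEq] at h
      rw [hp] at hP hQ
      exact PG2Aux.eq_of_dir_iv hP hQ (eD.injective h.1) (eK.injective h.2)
  · intro L hL
    obtain ⟨a, b, hab, hLab⟩ := hL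
    set W := Submodule.span K {a.rep, b.rep} with hW
    have memL : ∀ P : ℙ K (Fin 3 → K), P ∈ L ↔ P.rep ∈ W := by
      intro P
      rw [← Finset.mem_coe, hLab]
      exact PG2Aux.mem_lineThrough_iff a b P
    have memLmk : ∀ (v : Fin 3 → K) (hv : v ≠ 0),
        Projectivization.mk K v hv ∈ L ↔ v ∈ W := by
      intro v hv
      rw [memL, PG2Aux.rep_mem_iff]
    have hWrank : Module.finrank K W = 2 := by
      apply PG2Aux.finrank_span_pair
      apply PG2Aux.indep_of_ne a.rep_nonzero b.rep_nonzero
      rwa [a.mk_rep, b.mk_rep]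
    have hmemW : ∀ {P Q : ℙ K (Fin 3 → K)}, P ∈ L → Q ∈ L → P ≠ Q →
        Submodule.span K {P.rep, Q.rep} = W := by
      intro P Q hPL hQL hne
      apply PG2Aux.span_pair_eq W hWrank ((memL P).1 hPL) ((memL Q).1 hQL)
      apply PG2Aux.indep_of_ne P.rep_nonzero Q.rep_nonzero
      rwa [P.mk_rep, Q.mk_rep]
    by_cases hpL : p ∈ L
    · right
      have he2 : PG2Aux.e2 (K := K) ∈ W := by
        have h1 := (memL p).1 hpL
        rw [hp] at h1
        exact (PG2Aux.pt_mem_iff W).1 h1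
      obtain ⟨b', hb'L, hb'p⟩ : ∃ b', b' ∈ L ∧ b' ≠ p := by
        have haL : a ∈ L := (memL a).2 (Submodule.subset_span (by simp))
        have hbL : b ∈ L := (memL b).2 (Submodule.subset_span (by simp))
        rcases eq_or_ne a p with rfl | ha
        · exact ⟨b, hbL, fun h => hab h.symm⟩
        · exact ⟨a, haL, ha⟩
      have hconst : ∀ P, P ∈ L → P ≠ p → PG2Aux.dirP P = PG2Aux.dirP b' := by
        intro P hPL hPp
        rcases eq_or_ne P b' with rfl | hne
        · rfl
        · apply PG2Aux.dirv_eq_of_e2_mem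
            ((PG2Aux.ne_pt_iff P).1 (hp ▸ hPp))
            ((PG2Aux.ne_pt_iff b').1 (hp ▸ hb'p))
          rw [hmemW hPL hb'L hne]
          exact he2
      refine ⟨eD (PG2Aux.dirP b'), ?_⟩
      ext s
      simp only [Finset.mem_image, Finset.mem_insert, Finset.mem_univ, true_and]
      constructor
      · rintro ⟨P, hPL, rfl⟩
        by_cases hPp : P = p
        · left
          rw [if_pos hPp]
        · right
          refine ⟨eK (PG2Aux.iP P), ?_⟩
          rw [if_neg hPp, hconst P hPL hPp]
      · rintro (rfl | ⟨i, rfl⟩)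
        · exact ⟨p, hpL, by rw [if_pos rfl]⟩
        · obtain ⟨z, hz0, hzW, hz01, hzd, hzi⟩ :=
            PG2Aux.exists_iv W he2 ((memL b').1 hb'L)
              ((PG2Aux.ne_pt_iff b').1 (hp ▸ hb'p)) (eK.symm i)
          refine ⟨Projectivization.mk K z hz0, (memLmk z hz0).2 hzW, ?_⟩
          have hzp : Projectivization.mk K z hz0 ≠ p := by
            intro h
            rw [hp] at h
            exact hz01 ((PG2Aux.mk_eq_pt_iff z hz0).1 h)
          rw [if_neg hzp, PG2Aux.dirP_mk, PG2Aux.iP_mk, hzd, hzi,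
            eK.apply_symm_apply]
          rfl
    · left
      have he2 : PG2Aux.e2 (K := K) ∉ W := by
        intro h
        apply hpL
        rw [memL, hp]
        exact (PG2Aux.pt_mem_iff W).2 h
      have hsurj : ∀ d : Fin (q + 1), ∃ P : ℙ K (Fin 3 → K), P ∈ L ∧ P ≠ p ∧
          eD (PG2Aux.dirP P) = d := by
        intro d
        obtain ⟨v, hv0, hvW, hv01, hvd⟩ := PG2Aux.exists_dirv W hWrank he2 (eD.symm d)
        refine ⟨Projectivization.mk K v hv0, (memLmk v hv0).2 hvW, ?_, ?_⟩
        · intro h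
          rw [hp] at h
          exact hv01 ((PG2Aux.mk_eq_pt_iff v hv0).1 h)
        · rw [PG2Aux.dirP_mk, hvd, eD.apply_symm_apply]
      choose g hgL hgp hgd using hsurj
      refine ⟨fun d => eK (PG2Aux.iP (g d)), ?_⟩
      ext s
      simp only [Finset.mem_image, Finset.mem_univ, true_and]
      constructor
      · rintro ⟨P, hPL, rfl⟩
        have hPp : P ≠ p := fun h => hpL (h ▸ hPL)
        refine ⟨eD (PG2Aux.dirP P), ?_⟩
        have hg : g (eD (PG2Aux.dirP P)) = P := by
          by_contra hne
          apply hpL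
          rw [memL, hp]
          apply (PG2Aux.pt_mem_iff W).2
          have hdir : PG2Aux.dirP (g (eD (PG2Aux.dirP P))) = PG2Aux.dirP P :=
            eD.injective (hgd _)
          have hm := PG2Aux.e2_mem_span_of_dirv_eq
            (g (eD (PG2Aux.dirP P))).rep_nonzero P.rep_nonzero
            ((PG2Aux.ne_pt_iff _).1 (hp ▸ hgp _)) ((PG2Aux.ne_pt_iff _).1 (hp ▸ hPp))
            (by rw [Projectivization.mk_rep, Projectivization.mk_rep]; exact hne)
            hdir
          rwa [hmemW (hgL _) hPL hne] at hm
        rw [hg, if_neg hPp]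
      · rintro ⟨d, rfl⟩
        exact ⟨g d, hgL d, by rw [if_neg (hgp d), hgd d]⟩
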